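/- For a fixed pilot index k (pilot interval [k*T_pil, k*T_pil + T_ofdm], T_rep > T_ofdm), the set of offsets t ∈ [0, T_rep] for which some radar arrival t + j*T_rep (j ∈ ℕ) lies in the pilot interval has Lebesgue measure at most T_ofdm + min(T_ofdm, T_rep − T_ofdm), and exactly T_ofdm if k*T_pil ≥ 0 and the interval [k*T_pil, k*T_pil + T_ofdm] does not straddle a multiple of T_rep boundary in the sense that k*T_pil mod T_rep ≤ T_rep − T_ofdm. -/

import Mathlib

open MeasureTheory Set

theorem stmt16
    (T_ofdm T_pil T_rep : ℝ) (k : ℕ)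
    (hofdm : 0 < T_ofdm) (hpil : 0 < T_pil) (hrep : T_ofdm < T_rep) :
    volume {t ∈ Icc (0:ℝ) T_rep | ∃ j : ℕ,
        t + j * T_rep ∈ Icc ((k:ℝ) * T_pil) ((k:ℝ) * T_pil + T_ofdm)}
      ≤ ENNReal.ofReal (T_ofdm + min T_ofdm (T_rep - T_ofdm))
    ∧
    ((k:ℝ) * T_pil - T_rep * ⌊(k:ℝ) * T_pil / T_rep⌋ ≤ T_rep - T_ofdm →
      volume {t ∈ Icc (0:ℝ) T_rep | ∃ j : ℕ,
          t + j * T_rep ∈ Icc ((k:ℝ) * T_pil) ((k:ℝ) * T_pil + T_ofdm)}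
        = ENNReal.ofReal T_ofdm) := by
  have hrep0 : 0 < T_rep := hofdm.trans hrep
  set a : ℝ := (k:ℝ) * T_pil with ha_def
  have ha : 0 ≤ a := mul_nonneg (Nat.cast_nonneg k) hpil.le
  set n : ℤ := ⌊a / T_rep⌋ with hn_def
  set r : ℝ := a - T_rep * n with hr_def
  have hfl : (n:ℝ) ≤ a / T_rep := Int.floor_le _
  have hfl' : a / T_rep < n + 1 := Int.lt_floor_add_one _
  have hmul : (n:ℝ) * T_rep ≤ a := by
    have := mul_le_mul_of_nonneg_right hfl hrep0.le
    rwa [div_mul_cancel₀ _ hrep0.ne'] at this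
  have hmul' : a < ((n:ℝ) + 1) * T_rep := by
    have := mul_lt_mul_of_pos_right hfl' hrep0
    rwa [div_mul_cancel₀ _ hrep0.ne'] at this
  have hr0 : 0 ≤ r := by rw [hr_def]; nlinarith
  have hr1 : r < T_rep := by rw [hr_def]; nlinarith
  have hn0 : 0 ≤ n := Int.floor_nonneg.2 (div_nonneg ha hrep0.le)
  have hkey : a = r + T_rep * n := by rw [hr_def]; ring
  set S := {t ∈ Icc (0:ℝ) T_rep | ∃ j : ℕ,
      t + j * T_rep ∈ Icc a (a + T_ofdm)} with hS_def
  -- upper inclusion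
  have hsub : S ⊆ Icc r (min (r + T_ofdm) T_rep) ∪ Icc 0 (r + T_ofdm - T_rep)
      ∪ ({T_rep} : Set ℝ) := by
    rintro t ⟨⟨ht0, ht1⟩, j, hj1, hj2⟩
    have hjd : (j:ℝ) * T_rep = T_rep * n - ((n - j : ℤ) : ℝ) * T_rep := by
      push_cast; ring
    set d : ℤ := n - j with hd_def
    rcases lt_trichotomy d 0 with hd | hd | hd
    · have hd1 : (d:ℝ) ≤ -1 := by
        have h : ((d:ℝ)) ≤ ((-1 : ℤ) : ℝ) := Int.cast_le.2 (by omega : d ≤ -1)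
        simpa using h
      have : (d:ℝ) * T_rep ≤ -T_rep := by nlinarith
      exact Or.inl (Or.inr ⟨ht0, by rw [hjd] at hj2; linarith⟩)
    · rw [hd] at hjd; simp at hjd
      rw [hjd] at hj1 hj2
      exact Or.inl (Or.inl ⟨by linarith, le_min (by linarith) ht1⟩)
    · have hd1 : (1:ℝ) ≤ (d:ℝ) := by exact_mod_cast hd
      have : T_rep ≤ (d:ℝ) * T_rep := by nlinarith
      have ht : T_rep ≤ t := by rw [hjd] at hj1; linarith
      exact Or.inr (le_antisymm ht1 ht)
  have hub : volume S ≤ ENNReal.ofReal T_ofdm := by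
    refine le_trans (measure_mono hsub) ?_
    refine le_trans (measure_union_le _ _) ?_
    refine le_trans (add_le_add_left (measure_union_le _ _) _) ?_
    rw [Real.volume_Icc, Real.volume_Icc, measure_singleton, add_zero]
    rcases le_or_gt (r + T_ofdm) T_rep with h | h
    · rw [min_eq_left h]
      have h2 : ENNReal.ofReal (r + T_ofdm - T_rep - 0) = 0 :=
        ENNReal.ofReal_eq_zero.2 (by linarith)
      rw [h2, add_zero]
      exact le_of_eq (by ring_nf)
    · rw [min_eq_right h.le]
      rw [← ENNReal.ofReal_add (by linarith) (by linarith)]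
      exact le_of_eq (by ring_nf)
  constructor
  · refine hub.trans (ENNReal.ofReal_le_ofReal ?_)
    exact le_add_of_nonneg_right (le_min hofdm.le (by linarith))
  · intro hstraddle
    have hstraddle' : r + T_ofdm ≤ T_rep := by linarith
    refine le_antisymm hub ?_
    have hlb : Icc r (r + T_ofdm) ⊆ S := by
      intro t ⟨htl, htr⟩
      refine ⟨⟨le_trans hr0 htl, by linarith⟩, n.toNat, ?_, ?_⟩
      · have : ((n.toNat : ℕ) : ℝ) = (n : ℝ) := by
          exact_mod_cast Int.toNat_of_nonneg hn0
        rw [this]; rw [hkey]; linarith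
      · have : ((n.toNat : ℕ) : ℝ) = (n : ℝ) := by
          exact_mod_cast Int.toNat_of_nonneg hn0
        rw [this]; rw [hkey]; linarith
    calc ENNReal.ofReal T_ofdm = volume (Icc r (r + T_ofdm)) := by
          rw [Real.volume_Icc]; ring_nf
      _ ≤ volume S := measure_mono hlb
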